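/- arXiv:1602.06657 — 4 statements merged into one kernel-verified Lean document; each statement's English description precedes it below -/
import Mathlib

section
/- For every n ≥ 1 and all real numbers 0 ≤ μ₁ ≤ μ₂ ≤ ⋯ ≤ μₙ ≤ 1, the maximum resource utilization expression 2(μ₁μ₂ + μ₂μ₃ + ⋯ + μₙ₋₁μₙ + μₙ) − 2(μ₁² + μ₂² + ⋯ + μₙ²) is at most n/(n+1). -/
/-- For every `n ≥ 1` and all reals `0 ≤ μ₁ ≤ ⋯ ≤ μₙ ≤ 1`, the maximum
resource utilization `2(μ₁μ₂ + ⋯ + μ_{n-1}μₙ + μₙ) − 2(μ₁² + ⋯ + μₙ²)` is at most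
`n / (n + 1)`. -/
theorem stmt1 (n : ℕ) (hn : 1 ≤ n) (μ : ℕ → ℝ)
    (h0 : 0 ≤ μ 1)
    (hmono : ∀ i, 1 ≤ i → i < n → μ i ≤ μ (i + 1))
    (hlast : μ n ≤ 1) :
    2 * ((∑ i ∈ Finset.Ico 1 n, μ i * μ (i + 1)) + μ n)
      - 2 * ∑ i ∈ Finset.Icc 1 n, (μ i) ^ 2 ≤ (n : ℝ) / (n + 1) := by
  obtain ⟨m, rfl⟩ : ∃ m, n = m + 1 := ⟨n - 1, (Nat.succ_pred_eq_of_pos hn).symm⟩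
  set n := m + 1
  set ν : ℕ → ℝ := fun i => if i = 0 then 0 else if i ≤ n then μ i else 1 with hν
  have hν0 : ν 0 = 0 := by simp [hν]
  have hνn1 : ν (n + 1) = 1 := by simp [hν]
  have hνmid : ∀ i, 1 ≤ i → i ≤ n → ν i = μ i := by
    intro i h1 h2
    simp only [hν]
    rw [if_neg (by omega), if_pos h2]
  have hsum : ∑ i ∈ Finset.range (n + 1), (ν (i + 1) - ν i) = 1 := by
    rw [Finset.sum_range_sub ν (n + 1), hν0, hνn1]; ring
  -- sums of squares and products
  have h1 : ∑ i ∈ Finset.range (n + 1), ν (i + 1) ^ 2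
      = (∑ i ∈ Finset.Icc 1 n, μ i ^ 2) + 1 := by
    rw [Finset.sum_range_succ, hνn1]
    congr 1
    · rw [show Finset.Icc 1 n = Finset.Ico 1 (n + 1) by rfl,
        Finset.sum_Ico_eq_sum_range]
      apply Finset.sum_congr (by simp)
      intro i hi
      simp only [Finset.mem_range] at hi
      rw [add_comm 1 i, hνmid (i + 1) (by omega) (by omega)]
    · norm_num
  have h2 : ∑ i ∈ Finset.range (n + 1), ν i ^ 2
      = ∑ i ∈ Finset.Icc 1 n, μ i ^ 2 := by
    rw [Finset.sum_range_succ', hν0]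
    rw [show Finset.Icc 1 n = Finset.Ico 1 (n + 1) by rfl,
      Finset.sum_Ico_eq_sum_range]
    norm_num
    apply Finset.sum_congr rfl
    intro i hi
    simp only [Finset.mem_range] at hi
    rw [add_comm 1 i, hνmid (i + 1) (by omega) (by omega)]
  have h3 : ∑ i ∈ Finset.range (n + 1), ν i * ν (i + 1)
      = (∑ i ∈ Finset.Ico 1 n, μ i * μ (i + 1)) + μ n := by
    rw [Finset.sum_range_succ', hν0]
    rw [Finset.sum_range_succ]
    rw [hνn1, hνmid n (by omega) le_rfl]
    rw [Finset.sum_Ico_eq_sum_range]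
    simp only [mul_one, zero_mul, add_zero]
    congr 1
    apply Finset.sum_congr rfl
    intro i hi
    simp only [Finset.mem_range] at hi
    rw [add_comm 1 i, hνmid (i + 1) (by omega) (by omega),
      hνmid (i + 2) (by omega) (by omega)]
  have key : 2 * ((∑ i ∈ Finset.Ico 1 n, μ i * μ (i + 1)) + μ n)
      - 2 * ∑ i ∈ Finset.Icc 1 n, (μ i) ^ 2
      = 1 - ∑ i ∈ Finset.range (n + 1), (ν (i + 1) - ν i) ^ 2 := by
    have expand : ∑ i ∈ Finset.range (n + 1), (ν (i + 1) - ν i) ^ 2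
        = (∑ i ∈ Finset.range (n + 1), ν (i + 1) ^ 2)
          + (∑ i ∈ Finset.range (n + 1), ν i ^ 2)
          - 2 * ∑ i ∈ Finset.range (n + 1), ν i * ν (i + 1) := by
      rw [← Finset.sum_add_distrib, Finset.mul_sum, ← Finset.sum_sub_distrib]
      exact Finset.sum_congr rfl fun i _ => by ring
    rw [expand, h1, h2, h3]; ring
  rw [key]
  have hCS := sq_sum_le_card_mul_sum_sq (s := Finset.range (n + 1))
    (f := fun i => ν (i + 1) - ν i)
  rw [hsum] at hCS
  simp only [Finset.card_range, one_pow] at hCS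
  have hn1 : (0:ℝ) < (n:ℝ) + 1 := by positivity
  rw [le_div_iff₀ hn1]
  push_cast at hCS ⊢
  nlinarith [hCS]
end

section
/- For n ≥ 1 and real numbers 0 ≤ μ₁ ≤ μ₂ ≤ ⋯ ≤ μₙ ≤ 1, the expression 2(μ₁μ₂ + μ₂μ₃ + ⋯ + μₙ₋₁μₙ + μₙ) − 2(μ₁² + ⋯ + μₙ²) equals its maximum value n/(n+1) if and only if the utilization points are uniformly spaced, i.e. μᵢ = i/(n+1) for every i = 1, …, n. -/
open Finset

lemma sq_sum_identity (ν : ℕ → ℝ) :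
    ∀ m, 1 ≤ m →
      ∑ i ∈ Finset.range m, (ν (i+1) - ν i)^2
        = ν m ^ 2 + ν 0 ^ 2 + 2 * ∑ i ∈ Finset.Ico 1 m, ν i ^ 2
          - 2 * ∑ i ∈ Finset.range m, ν i * ν (i+1) := by
  intro m hm
  induction m, hm using Nat.le_induction with
  | base => simp; ring
  | succ m hm ih =>
      rw [Finset.sum_range_succ, ih, Finset.sum_range_succ (f := fun i => ν i * ν (i+1)),
        Finset.sum_Ico_succ_top (by omega : 1 ≤ m)]
      ring

/-- For `n ≥ 1` and reals `0 ≤ μ₁ ≤ ⋯ ≤ μₙ ≤ 1`, the expression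
`2(μ₁μ₂ + ⋯ + μ_{n-1}μₙ + μₙ) − 2(μ₁² + ⋯ + μₙ²)` equals its maximum value
`n / (n + 1)` if and only if `μ i = i / (n + 1)` for every `i = 1, …, n`. -/
theorem stmt2 (n : ℕ) (hn : 1 ≤ n) (μ : ℕ → ℝ)
    (h0 : 0 ≤ μ 1)
    (hmono : ∀ i, 1 ≤ i → i < n → μ i ≤ μ (i + 1))
    (hlast : μ n ≤ 1) :
    (2 * ((∑ i ∈ Finset.Ico 1 n, μ i * μ (i + 1)) + μ n)
        - 2 * ∑ i ∈ Finset.Icc 1 n, (μ i) ^ 2 = (n : ℝ) / (n + 1))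
      ↔ (∀ i ∈ Finset.Icc 1 n, μ i = (i : ℝ) / (n + 1)) := by
  set ν : ℕ → ℝ := fun i => if i = 0 then 0 else if i ≤ n then μ i else 1 with hν
  have hν0 : ν 0 = 0 := by simp [hν]
  have hνtop : ν (n+1) = 1 := by simp [hν]
  have hνmid : ∀ i, 1 ≤ i → i ≤ n → ν i = μ i := by
    intro i h1 h2; simp only [hν]; rw [if_neg (by omega), if_pos h2]
  have hnpos : (0:ℝ) < (n:ℝ) + 1 := by positivity
  set c : ℝ := 1 / ((n:ℝ) + 1) with hc
  -- total gap sum is 1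
  have hsumd : ∑ i ∈ Finset.range (n+1), (ν (i+1) - ν i) = 1 := by
    rw [Finset.sum_range_sub, hνtop, hν0]; ring
  -- sum of squared gaps
  have hS : ∑ i ∈ Finset.range (n+1), (ν (i+1) - ν i)^2
      = 1 + 2 * ∑ i ∈ Finset.Icc 1 n, (μ i)^2
        - 2 * ((∑ i ∈ Finset.Ico 1 n, μ i * μ (i + 1)) + μ n) := by
    rw [sq_sum_identity ν (n+1) (by omega), hνtop, hν0]
    have e1 : ∑ i ∈ Finset.Ico 1 (n+1), ν i ^ 2 = ∑ i ∈ Finset.Icc 1 n, (μ i)^2 := by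
      rw [show Finset.Ico 1 (n+1) = Finset.Icc 1 n by rfl]
      exact Finset.sum_congr rfl fun i hi => by
        rw [hνmid i (Finset.mem_Icc.mp hi).1 (Finset.mem_Icc.mp hi).2]
    have e2 : ∑ i ∈ Finset.range (n+1), ν i * ν (i+1)
        = (∑ i ∈ Finset.Ico 1 n, μ i * μ (i + 1)) + μ n := by
      rw [Finset.range_eq_Ico, Finset.sum_eq_sum_Ico_succ_bot (by omega),
        Finset.sum_Ico_succ_top hn, hν0, hνtop, hνmid n hn le_rfl]
      have : ∀ i ∈ Finset.Ico 1 n, ν i * ν (i+1) = μ i * μ (i+1) := by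
        intro i hi
        obtain ⟨h1, h2⟩ := Finset.mem_Ico.mp hi
        rw [hνmid i h1 (by omega), hνmid (i+1) (by omega) (by omega)]
      rw [Finset.sum_congr rfl this]; ring
    rw [e1, e2]; ring
  -- main identity: expression = n/(n+1) - Σ (gap - c)^2
  have hB : ∑ i ∈ Finset.range (n+1), ((ν (i+1) - ν i) - c)^2
      = (∑ i ∈ Finset.range (n+1), (ν (i+1) - ν i)^2) - 2*c*(∑ i ∈ Finset.range (n+1), (ν (i+1) - ν i)) + ((n:ℝ)+1)*c^2 := by
    have : ∀ i ∈ Finset.range (n+1),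
        ((ν (i+1) - ν i) - c)^2 = (ν (i+1) - ν i)^2 - 2*c*(ν (i+1) - ν i) + c^2 := by
      intro i _; ring
    rw [Finset.sum_congr rfl this, Finset.sum_add_distrib, Finset.sum_sub_distrib,
      ← Finset.mul_sum, Finset.sum_const, Finset.card_range]
    push_cast; ring
  have hkey : 2 * ((∑ i ∈ Finset.Ico 1 n, μ i * μ (i + 1)) + μ n)
        - 2 * ∑ i ∈ Finset.Icc 1 n, (μ i) ^ 2
      = (n:ℝ)/(n+1) - ∑ i ∈ Finset.range (n+1), ((ν (i+1) - ν i) - c)^2 := by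
    rw [hB, hS, hsumd, hc]
    field_simp
    ring
  rw [hkey]
  constructor
  · intro h
    have hz : ∑ i ∈ Finset.range (n+1), ((ν (i+1) - ν i) - c)^2 = 0 := by linarith
    have hd : ∀ i ∈ Finset.range (n+1), ((ν (i+1) - ν i) - c)^2 = 0 :=
      (Finset.sum_eq_zero_iff_of_nonneg (fun i _ => sq_nonneg _)).mp hz
    have hstep : ∀ i, i ≤ n → ν (i+1) = ν i + c := by
      intro i hi
      have := hd i (Finset.mem_range.mpr (by omega))
      have := pow_eq_zero_iff (n := 2) (by norm_num) |>.mp this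
      linarith [sub_eq_zero.mp this]
    have hall : ∀ i, i ≤ n + 1 → ν i = (i:ℝ) * c := by
      intro i
      induction i with
      | zero => intro _; simp [hν0]
      | succ k ihk =>
          intro hk
          rw [hstep k (by omega), ihk (by omega)]
          push_cast; ring
    intro i hi
    obtain ⟨h1, h2⟩ := Finset.mem_Icc.mp hi
    rw [← hνmid i h1 h2, hall i (by omega), hc]
    ring
  · intro h
    have hd : ∀ i ∈ Finset.range (n+1), ((ν (i+1) - ν i) - c) = 0 := by
      intro i hi
      have hi' : i ≤ n := Nat.lt_succ_iff.mp (Finset.mem_range.mp hi)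
      have vi : ν i = (i:ℝ) * c := by
        rcases Nat.eq_zero_or_pos i with h0' | h0'
        · simp [h0', hν0]
        · rw [hνmid i h0' hi', h i (Finset.mem_Icc.mpr ⟨h0', hi'⟩), hc]; ring
      have vi1 : ν (i+1) = ((i:ℝ)+1) * c := by
        rcases Nat.lt_or_ge i n with hlt | hge
        · rw [hνmid (i+1) (by omega) (by omega), h (i+1) (Finset.mem_Icc.mpr ⟨by omega, by omega⟩), hc]
          push_cast; ring
        · have : i = n := by omega
          subst this
          rw [hνtop, hc]
          field_simp
      rw [vi, vi1]; ring
    have : ∑ i ∈ Finset.range (n+1), ((ν (i+1) - ν i) - c)^2 = 0 :=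
      Finset.sum_eq_zero fun i hi => by rw [hd i hi]; ring
    rw [this]; ring
end

section
/- Let V be a finite type and f : Finset V → ℝ a monotone (S ⊆ T implies f(S) ≤ f(T)) submodular set function with f(∅) = 0. Fix b ≥ 1 and let the greedy sequence be S₀ = ∅ and, for each t < b, S_{t+1} = S_t ∪ {v_t} where v_t maximizes f(S_t ∪ {v}) over all v. Then for every T ⊆ V with |T| = b, f(S_b) ≥ (1 − 1/e) · f(T). -/
/-- Let `V` be a finite type and `f : Finset V → ℝ` a monotone submodular
set function with `f ∅ = 0`.  Fix `b ≥ 1` and let the greedy sequence be `S 0 = ∅` and,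
for `t < b`, `S (t+1) = S t ∪ {v_t}` where `v_t` maximizes `f (S t ∪ {v})` over all `v`.
Then for every `T ⊆ V` with `|T| = b`, `f (S b) ≥ (1 − 1/e) ⬝ f T`. -/
theorem stmt9 {V : Type*} [Fintype V] [DecidableEq V]
    (f : Finset V → ℝ)
    (hmono : ∀ S T : Finset V, S ⊆ T → f S ≤ f T)
    (hsub : ∀ S T : Finset V, S ⊆ T → ∀ v : V,
      f (insert v S) + f T ≥ f (insert v T) + f S)
    (hempty : f ∅ = 0)
    (b : ℕ) (hb : 1 ≤ b)
    (S : ℕ → Finset V) (hS0 : S 0 = ∅)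
    (hgreedy : ∀ t < b, ∃ v : V, S (t + 1) = insert v (S t) ∧
      ∀ u : V, f (insert u (S t)) ≤ f (insert v (S t))) :
    ∀ T : Finset V, T.card = b → f (S b) ≥ (1 - 1 / Real.exp 1) * f T := by
  intro T hT
  have hbR : (1:ℝ) ≤ (b:ℝ) := by exact_mod_cast hb
  have hbpos : (0:ℝ) < (b:ℝ) := by linarith
  have hT0 : 0 ≤ f T := by
    have := hmono ∅ T (Finset.empty_subset T); linarith
  -- diminishing returns union bound
  have key : ∀ A B : Finset V,
      f (A ∪ B) ≤ f A + ∑ v ∈ B, (f (insert v A) - f A) := by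
    intro A B
    induction B using Finset.induction_on with
    | empty => simp
    | insert _ _ hv ih =>
      rename_i v B'
      have hsubm := hsub A (A ∪ B') Finset.subset_union_left v
      rw [Finset.union_insert, Finset.sum_insert hv]
      linarith
  have hc0 : 0 ≤ 1 - 1/(b:ℝ) := by
    have : 1/(b:ℝ) ≤ 1 := by
      rw [div_le_one hbpos]; exact hbR
    linarith
  -- one greedy step
  have step : ∀ t, t < b → f T - f (S (t+1)) ≤ (1 - 1/(b:ℝ)) * (f T - f (S t)) := by
    intro t ht
    obtain ⟨v, hSv, hmax⟩ := hgreedy t ht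
    have h1 : f T ≤ f (S t ∪ T) := hmono _ _ Finset.subset_union_right
    have h2 := key (S t) T
    have h3 : ∑ u ∈ T, (f (insert u (S t)) - f (S t))
        ≤ (b:ℝ) * (f (S (t+1)) - f (S t)) := by
      rw [hSv]
      calc ∑ u ∈ T, (f (insert u (S t)) - f (S t))
          ≤ ∑ _u ∈ T, (f (insert v (S t)) - f (S t)) :=
            Finset.sum_le_sum (fun u _ => by linarith [hmax u])
        _ = (b:ℝ) * (f (insert v (S t)) - f (S t)) := by
            rw [Finset.sum_const, hT, nsmul_eq_mul]
    have h4 : f T - f (S t) ≤ (b:ℝ) * (f (S (t+1)) - f (S t)) := by linarith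
    have h5 : (f T - f (S t)) / (b:ℝ) ≤ f (S (t+1)) - f (S t) := by
      rw [div_le_iff₀ hbpos]; linarith
    have hexp : (1 - 1/(b:ℝ)) * (f T - f (S t))
        = (f T - f (S t)) - (f T - f (S t)) / (b:ℝ) := by
      ring
    linarith
  -- induction
  have ind : ∀ t, t ≤ b → f T - f (S t) ≤ (1 - 1/(b:ℝ)) ^ t * f T := by
    intro t
    induction t with
    | zero => intro _; simp [hS0, hempty]
    | succ t ih =>
      intro ht
      have ht' : t < b := ht
      have ih' := ih (le_of_lt ht')
      have hst := step t ht'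
      calc f T - f (S (t+1)) ≤ (1 - 1/(b:ℝ)) * (f T - f (S t)) := hst
        _ ≤ (1 - 1/(b:ℝ)) * ((1 - 1/(b:ℝ)) ^ t * f T) :=
            mul_le_mul_of_nonneg_left ih' hc0
        _ = (1 - 1/(b:ℝ)) ^ (t+1) * f T := by ring
  have hfinal := ind b le_rfl
  -- (1 - 1/b)^b ≤ exp (-1)
  have hcle : 1 - 1/(b:ℝ) ≤ Real.exp (-(1/(b:ℝ))) := by
    have := Real.add_one_le_exp (-(1/(b:ℝ)))
    linarith
  have hpow : (1 - 1/(b:ℝ)) ^ b ≤ Real.exp (-1) := by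
    calc (1 - 1/(b:ℝ)) ^ b ≤ (Real.exp (-(1/(b:ℝ)))) ^ b := pow_le_pow_left₀ hc0 hcle b
      _ = Real.exp ((b:ℝ) * (-(1/(b:ℝ)))) := by rw [Real.exp_nat_mul]
      _ = Real.exp (-1) := by
          congr 1
          field_simp
  have hmul : (1 - 1/(b:ℝ)) ^ b * f T ≤ Real.exp (-1) * f T :=
    mul_le_mul_of_nonneg_right hpow hT0
  have hexpneg : Real.exp (-1) = 1 / Real.exp 1 := by
    rw [Real.exp_neg, one_div]
  have hexpand : (1 - 1 / Real.exp 1) * f T = f T - Real.exp (-1) * f T := by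
    rw [hexpneg]; ring
  rw [ge_iff_le, hexpand]
  linarith
end

section
/- Let W be a finite type, b : W → ℝ≥0 with ∑_w b(w) ≤ 1, and κ ≥ 1. Let E₁, …, E_κ be independent random variables with values in Option W, each with distribution P(Eᵢ = some w) = b(w) for every w and P(Eᵢ = none) = 1 − ∑_w b(w). Let A₁, …, A_κ and B₁, …, B_κ be finite subsets of W with Aᵢ ∩ Bᵢ = ∅ and ∑_{w∈Bᵢ} b(w) < 1 for each i. Then P( ∃ i, Eᵢ ∈ some '' Aᵢ │ ∀ i, Eᵢ ∉ some '' Bᵢ ) = 1 − ∏_{i=1}^{κ} ( 1 − (∑_{w∈Aᵢ} b(w)) / (1 − ∑_{w∈Bᵢ} b(w)) ). -/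
open MeasureTheory ProbabilityTheory Set
open scoped ENNReal NNReal

lemma aux_nullMeasurable_of_cover {Ω : Type*} [MeasurableSpace Ω] {μ : Measure Ω}
    [IsProbabilityMeasure μ] {ι : Type*} [Fintype ι] (s : ι → Set Ω)
    (hcov : ∀ ω, ∃ i, ω ∈ s i) (hsum : ∑ i, μ (s i) ≤ 1) (i : ι) :
    NullMeasurableSet (s i) μ := by
  classical
  set t : ι → Set Ω := fun j => toMeasurable μ (s j) with ht
  set U : Set Ω := ⋃ j ∈ Finset.univ.erase i, t j with hU
  have hUm : MeasurableSet U :=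
    Finset.measurableSet_biUnion _ (fun j _ => measurableSet_toMeasurable μ (s j))
  have hsub : Uᶜ ⊆ s i := by
    intro ω hω
    rcases hcov ω with ⟨j, hj⟩
    by_cases hji : j = i
    · exact hji ▸ hj
    · exact absurd (mem_iUnion₂.mpr ⟨j, Finset.mem_erase.mpr ⟨hji, Finset.mem_univ j⟩,
        subset_toMeasurable μ (s j) hj⟩) hω
  have hnull : μ (s i \ Uᶜ) = 0 := by
    have h1 : s i \ Uᶜ ⊆ t i ∩ U := fun ω hω =>
      ⟨subset_toMeasurable μ (s i) hω.1, not_not.mp hω.2⟩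
    have hcover : t i ∪ U = univ := by
      apply eq_univ_of_forall; intro ω
      rcases hcov ω with ⟨j, hj⟩
      by_cases hji : j = i
      · exact Or.inl (subset_toMeasurable μ (s i) (hji ▸ hj))
      · exact Or.inr (mem_iUnion₂.mpr ⟨j, Finset.mem_erase.mpr ⟨hji, Finset.mem_univ j⟩,
          subset_toMeasurable μ (s j) hj⟩)
    have hUle : μ U ≤ ∑ j ∈ Finset.univ.erase i, μ (s j) := by
      refine (measure_biUnion_finset_le _ _).trans ?_
      exact Finset.sum_le_sum fun j _ => le_of_eq (measure_toMeasurable (s j))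
    have key : 1 + μ (t i ∩ U) ≤ 1 + 0 := by
      have h2 := measure_union_add_inter (μ := μ) (t i) hUm
      rw [hcover, measure_univ] at h2
      calc 1 + μ (t i ∩ U) = μ (t i) + μ U := h2
        _ ≤ μ (s i) + ∑ j ∈ Finset.univ.erase i, μ (s j) := by
            exact add_le_add (le_of_eq (measure_toMeasurable (s i))) hUle
        _ = ∑ j, μ (s j) := Finset.add_sum_erase _ (fun j => μ (s j)) (Finset.mem_univ i)
        _ ≤ (1 : ℝ≥0∞) + 0 := by simpa using hsum
    have h0 : μ (t i ∩ U) ≤ 0 :=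
      (ENNReal.add_le_add_iff_left (by norm_num : (1:ℝ≥0∞) ≠ ⊤)).mp key
    exact le_antisymm ((measure_mono h1).trans h0) zero_le
  refine (hUm.compl.nullMeasurableSet).congr ?_
  exact MeasureTheory.ae_eq_set.mpr ⟨by simp [diff_eq_empty.mpr hsub], hnull⟩

/-- Let `W` be a finite type, `b : W → ℝ≥0` with `∑ b w ≤ 1`, and `κ ≥ 1`.
Let `E₁, …, E_κ` be independent `Option W`-valued random variables, each with
`P(Eᵢ = some w) = b w` and `P(Eᵢ = none) = 1 − ∑ b w`.  Let `Aᵢ, Bᵢ ⊆ W` be finite sets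
with `Aᵢ ∩ Bᵢ = ∅` and `∑_{w ∈ Bᵢ} b w < 1`.  Then
`P(∃ i, Eᵢ ∈ some '' Aᵢ ∣ ∀ i, Eᵢ ∉ some '' Bᵢ)
  = 1 − ∏ᵢ (1 − (∑_{w ∈ Aᵢ} b w) / (1 − ∑_{w ∈ Bᵢ} b w))`. -/
theorem stmt11 {Ω : Type*} [MeasurableSpace Ω] (μ : Measure Ω) [IsProbabilityMeasure μ]
    {W : Type*} [Fintype W] [DecidableEq W]
    (b : W → NNReal) (hb : ∑ w : W, b w ≤ 1)
    (κ : ℕ) (hκ : 1 ≤ κ) (E : Fin κ → Ω → Option W)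
    (hindep : iIndepFun (m := fun _ => (⊤ : MeasurableSpace (Option W))) E μ)
    (hsome : ∀ i w, μ {ω | E i ω = some w} = (b w : ENNReal))
    (hnone : ∀ i, μ {ω | E i ω = none} = 1 - ∑ w : W, (b w : ENNReal))
    (A B : Fin κ → Finset W)
    (hdisj : ∀ i, Disjoint (A i) (B i))
    (hBlt : ∀ i, ∑ w ∈ B i, (b w : ℝ) < 1) :
    μ[{ω | ∃ i, E i ω ∈ Option.some '' (A i : Set W)} |
        {ω | ∀ i, E i ω ∉ Option.some '' (B i : Set W)}]
      = ENNReal.ofReal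
          (1 - ∏ i : Fin κ,
            (1 - (∑ w ∈ A i, (b w : ℝ)) / (1 - ∑ w ∈ B i, (b w : ℝ)))) := by
  classical
  have hSb1 : (∑ w : W, (b w : ℝ≥0∞)) ≤ 1 := by
    calc ∑ w : W, (b w : ℝ≥0∞) = ((∑ w : W, b w : ℝ≥0) : ℝ≥0∞) := by push_cast; rfl
      _ ≤ 1 := by exact_mod_cast hb
  -- fibers are null measurable
  have hfib : ∀ (i : Fin κ) (x : Option W), NullMeasurableSet {ω | E i ω = x} μ := by
    intro i
    apply aux_nullMeasurable_of_cover (fun x => {ω | E i ω = x}) (fun ω => ⟨E i ω, rfl⟩)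
    rw [Fintype.sum_option]
    simp only [hsome i, hnone i]
    rw [tsub_add_cancel_of_le hSb1]
  have hNMpre : ∀ (i : Fin κ) (s : Set (Option W)), NullMeasurableSet (E i ⁻¹' s) μ := by
    intro i s
    have : E i ⁻¹' s = ⋃ x ∈ s, {ω | E i ω = x} := by
      ext ω; simp [eq_comm]
    rw [this]
    exact .biUnion s.to_countable fun x _ => hfib i x
  -- measure of preimage of a finite set of `some`s
  have hpre : ∀ (i : Fin κ) (C : Finset W),
      μ (E i ⁻¹' (Option.some '' (C : Set W))) = ∑ w ∈ C, (b w : ℝ≥0∞) := by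
    intro i C
    have heq : E i ⁻¹' (Option.some '' (C : Set W)) = ⋃ w ∈ C, {ω | E i ω = some w} := by
      ext ω
      simp only [mem_preimage, mem_image, Finset.mem_coe, mem_iUnion, mem_setOf_eq]
      constructor
      · rintro ⟨w, hw, h⟩; exact ⟨w, hw, h.symm⟩
      · rintro ⟨w, hw, h⟩; exact ⟨w, hw, h.symm⟩
    rw [heq, measure_biUnion_finset₀ ?_ (fun w _ => hfib i (some w))]
    · exact Finset.sum_congr rfl fun w _ => hsome i w
    · intro w _ v _ hwv
      refine Disjoint.aedisjoint ?_
      rw [Set.disjoint_left]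
      intro ω h1 h2
      exact hwv (by simpa using h1.symm.trans (h2 : E i ω = some v))
  have hcompl : ∀ (i : Fin κ) (C : Finset W),
      μ (E i ⁻¹' ((Option.some '' (C : Set W))ᶜ)) = 1 - ∑ w ∈ C, (b w : ℝ≥0∞) := by
    intro i C
    rw [Set.preimage_compl, measure_compl₀ (hNMpre i _) (measure_ne_top μ _),
      measure_univ, hpre]
  -- product formula from independence
  have hint : ∀ (C : Fin κ → Finset W),
      μ (⋂ i, E i ⁻¹' ((Option.some '' (C i : Set W))ᶜ)) =
        ∏ i : Fin κ, (1 - ∑ w ∈ C i, (b w : ℝ≥0∞)) := by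
    intro C
    have h1 := hindep.measure_inter_preimage_eq_mul Finset.univ
      (sets := fun i => (Option.some '' (C i : Set W))ᶜ)
      (fun i _ => MeasurableSpace.measurableSet_top)
    have h2 : (⋂ i ∈ Finset.univ, E i ⁻¹' ((Option.some '' (C i : Set W))ᶜ)) =
        ⋂ i, E i ⁻¹' ((Option.some '' (C i : Set W))ᶜ) := by
      simp
    rw [h2] at h1
    rw [h1]
    exact Finset.prod_congr rfl fun i _ => hcompl i (C i)
  -- real quantities
  set α : Fin κ → ℝ := fun i => ∑ w ∈ A i, (b w : ℝ) with hαdef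
  set β : Fin κ → ℝ := fun i => ∑ w ∈ B i, (b w : ℝ) with hβdef
  have hα0 : ∀ i, 0 ≤ α i := fun i => Finset.sum_nonneg fun w _ => (b w).coe_nonneg
  have hβ0 : ∀ i, 0 ≤ β i := fun i => Finset.sum_nonneg fun w _ => (b w).coe_nonneg
  have hβ1 : ∀ i, β i < 1 := hBlt
  have hαβ : ∀ i, α i + β i ≤ 1 := by
    intro i
    have h1 : α i + β i = ∑ w ∈ A i ∪ B i, (b w : ℝ) :=
      (Finset.sum_union (hdisj i)).symm
    have h2 : ∑ w ∈ A i ∪ B i, (b w : ℝ) ≤ ∑ w : W, (b w : ℝ) :=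
      Finset.sum_le_sum_of_subset_of_nonneg (Finset.subset_univ _)
        (fun w _ _ => (b w).coe_nonneg)
    have h3 : ∑ w : W, (b w : ℝ) ≤ 1 := by exact_mod_cast hb
    linarith
  -- ENNReal-real bridge for sums
  have hCsum : ∀ C : Finset W, (∑ w ∈ C, (b w : ℝ≥0∞)) =
      ENNReal.ofReal (∑ w ∈ C, (b w : ℝ)) := by
    intro C
    rw [ENNReal.ofReal_sum_of_nonneg (fun w _ => (b w).coe_nonneg)]
    exact Finset.sum_congr rfl fun w _ => (ENNReal.ofReal_coe_nnreal (p := b w)).symm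
  have hone : ∀ C : Finset W, (0:ℝ) ≤ ∑ w ∈ C, (b w : ℝ) → ∑ w ∈ C, (b w : ℝ) ≤ 1 →
      (1 : ℝ≥0∞) - ∑ w ∈ C, (b w : ℝ≥0∞) = ENNReal.ofReal (1 - ∑ w ∈ C, (b w : ℝ)) := by
    intro C h0 h1
    rw [hCsum, ENNReal.ofReal_sub _ h0, ENNReal.ofReal_one]
  -- the sets
  set T : Set Ω := {ω | ∀ i, E i ω ∉ Option.some '' (B i : Set W)} with hTdef
  set S : Set Ω := {ω | ∃ i, E i ω ∈ Option.some '' (A i : Set W)} with hSdef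
  have hTeq : T = ⋂ i, E i ⁻¹' ((Option.some '' (B i : Set W))ᶜ) := by
    ext ω; simp [hTdef]
  have hSTc : Sᶜ ∩ T = ⋂ i, E i ⁻¹' ((Option.some '' ((A i ∪ B i : Finset W) : Set W))ᶜ) := by
    ext ω
    simp only [hSdef, hTdef, Set.mem_inter_iff, Set.mem_compl_iff, mem_setOf_eq, not_exists,
      Set.mem_iInter, mem_preimage, Finset.coe_union, Set.image_union, Set.mem_union]
    constructor
    · rintro ⟨h1, h2⟩ i
      intro h3
      rcases h3 with h3 | h3
      · exact h1 i h3
      · exact h2 i h3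
    · intro h
      exact ⟨fun i hi => h i (Or.inl hi), fun i hi => h i (Or.inr hi)⟩
  -- key real products
  set P : ℝ := ∏ i : Fin κ, (1 - β i) with hPdef
  set Q : ℝ := ∏ i : Fin κ, (1 - α i - β i) with hQdef
  have hP0 : 0 < P := Finset.prod_pos fun i _ => by linarith [hβ1 i]
  have hQ0 : 0 ≤ Q := Finset.prod_nonneg fun i _ => by linarith [hαβ i]
  have hQP : Q ≤ P := Finset.prod_le_prod (fun i _ => by linarith [hαβ i])
    (fun i _ => by linarith [hα0 i])
  have hμT : μ T = ENNReal.ofReal P := by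
    rw [hTeq, hint B, hPdef,
      ENNReal.ofReal_prod_of_nonneg (fun i _ => by linarith [hβ1 i])]
    exact Finset.prod_congr rfl fun i _ => hone (B i) (hβ0 i) (hβ1 i).le
  have hμSTc : μ (Sᶜ ∩ T) = ENNReal.ofReal Q := by
    rw [hSTc, hint (fun i => A i ∪ B i), hQdef,
      ENNReal.ofReal_prod_of_nonneg (fun i _ => by linarith [hαβ i])]
    refine Finset.prod_congr rfl fun i _ => ?_
    rw [hone (A i ∪ B i) (Finset.sum_nonneg fun w _ => (b w).coe_nonneg)
      (by rw [Finset.sum_union (hdisj i)]; exact hαβ i)]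
    rw [Finset.sum_union (hdisj i)]
    congr 1
    ring
  have hTnm : NullMeasurableSet T μ := by
    rw [hTeq]; exact .iInter fun i => hNMpre i _
  have hSTcnm : NullMeasurableSet (Sᶜ ∩ T) μ := by
    rw [hSTc]; exact .iInter fun i => hNMpre i _
  have hdiffeq : T \ (Sᶜ ∩ T) = S ∩ T := by
    ext ω
    simp only [Set.mem_diff, Set.mem_inter_iff, Set.mem_compl_iff]
    tauto
  have hμST : μ (S ∩ T) = ENNReal.ofReal P - ENNReal.ofReal Q := by
    rw [← hdiffeq, measure_diff Set.inter_subset_right hSTcnm (measure_ne_top μ _),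
      hμT, hμSTc]
  have hcond : μ[S | T] = (μ T)⁻¹ * μ (S ∩ T) := by
    rw [ProbabilityTheory.cond, Measure.smul_apply, smul_eq_mul,
      Measure.restrict_apply₀' hTnm]
  rw [hcond, hμT, hμST, ← ENNReal.ofReal_sub _ hQ0,
    ← ENNReal.ofReal_inv_of_pos hP0,
    ← ENNReal.ofReal_mul (by positivity)]
  congr 1
  have hprod : (∏ i : Fin κ, (1 - α i / (1 - β i))) = Q / P := by
    rw [hQdef, hPdef, ← Finset.prod_div_distrib]
    refine Finset.prod_congr rfl fun i _ => ?_
    have hne : (1 : ℝ) - β i ≠ 0 := by linarith [hβ1 i]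
    field_simp
    ring
  rw [hprod]
  field_simp
end
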